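/- Let θ be an inner function and φ, ψ ∈ H∞, and set S = T_φ P_{θH²(𝕋)} + T_ψ P_{𝒦_θ} ∈ B(H²(𝕋)). Then S(θH²(𝕋)) ⊆ θH²(𝕋), and the commutator satisfies S T_z − T_z S = (S − T_ψ) P_{θH²(𝕋)} T_z P_{𝒦_θ}. -/

import Mathlib

open MeasureTheory Complex AddCircle
open scoped InnerProductSpace ENNReal Real

noncomputable section

namespace PaperTH

instance fact2pi : Fact (0 < 2 * Real.pi) := ⟨by positivity⟩

/-- The circle, as `ℝ / 2πℤ`. -/
abbrev 𝕋c := AddCircle (2 * Real.pi)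

/-- The normalized Lebesgue (Haar) measure on the circle. -/
abbrev μc : Measure 𝕋c := haarAddCircle

/-- `L²(𝕋)`. -/
abbrev L2 := Lp ℂ 2 μc

/-- The Hardy space `H²(𝕋)`: members of `L²(𝕋)` all of whose Fourier coefficients of
negative index vanish. -/
def Hardy : Submodule ℂ L2 where
  carrier := {f | ∀ n : ℤ, n < 0 → fourierCoeff (⇑f) n = 0}
  add_mem' := by
    intro f g hf hg n hn
    have hf' := hf n hn
    have hg' := hg n hn
    rw [← fourierBasis_repr] at hf' hg' ⊢
    rw [map_add, lp.coeFn_add, Pi.add_apply, hf', hg', add_zero]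
  zero_mem' := by
    intro n hn
    rw [← fourierBasis_repr, map_zero, lp.coeFn_zero, Pi.zero_apply]
  smul_mem' := by
    intro c f hf n hn
    have hf' := hf n hn
    rw [← fourierBasis_repr] at hf' ⊢
    rw [_root_.map_smul, lp.coeFn_smul, Pi.smul_apply, hf', smul_zero]

theorem isClosed_Hardy : IsClosed (Hardy : Set L2) := by
  have h : (Hardy : Set L2) =
      ⋂ (n : ℤ) (_ : n < 0), ((innerSL ℂ (fourierBasis n)) ⁻¹' {(0 : ℂ)}) := by
    ext f
    simp only [Set.mem_iInter, Set.mem_preimage, Set.mem_singleton_iff, SetLike.mem_coe]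
    constructor
    · intro hf n hn
      have := hf n hn
      rw [← fourierBasis_repr, fourierBasis.repr_apply_apply] at this
      simpa using this
    · intro hf n hn
      have := hf n hn
      rw [← fourierBasis_repr, fourierBasis.repr_apply_apply]
      simpa using this
  rw [h]
  exact isClosed_iInter fun n => isClosed_iInter fun _ =>
    (isClosed_singleton).preimage (innerSL ℂ (fourierBasis n)).continuous

instance : CompleteSpace Hardy := isClosed_Hardy.completeSpace_coe

/-- The Szegő projection `P₊ : L²(𝕋) → L²(𝕋)` onto the Hardy space. -/
def Pplus : L2 →L[ℂ] L2 := Hardy.subtypeL.comp (Submodule.orthogonalProjectionOnto Hardy)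

/-- `P₋ = I - P₊`. -/
def Pminus : L2 →L[ℂ] L2 := ContinuousLinearMap.id ℂ L2 - Pplus

/-- Underlying function of the multiplication operator. -/
def MopFun (φ : 𝕋c → ℂ) (hφ : MemLp φ ∞ μc) (f : L2) : L2 :=
  ((Lp.memLp f).smul (r := 2) hφ).toLp (φ • ⇑f)

theorem MopFun_coeFn (φ : 𝕋c → ℂ) (hφ : MemLp φ ∞ μc) (f : L2) :
    ⇑(MopFun φ hφ f) =ᵐ[μc] φ • ⇑f := MemLp.coeFn_toLp _

theorem MopFun_add (φ : 𝕋c → ℂ) (hφ : MemLp φ ∞ μc) (f g : L2) :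
    MopFun φ hφ (f + g) = MopFun φ hφ f + MopFun φ hφ g := by
  apply Lp.ext
  filter_upwards [MopFun_coeFn φ hφ (f + g), MopFun_coeFn φ hφ f, MopFun_coeFn φ hφ g,
    Lp.coeFn_add f g, Lp.coeFn_add (MopFun φ hφ f) (MopFun φ hφ g)] with x h1 h2 h3 h4 h5
  simp only [h1, h5, Pi.add_apply, h2, h3, Pi.smul_apply, Pi.mul_apply, smul_eq_mul, h4]
  ring

theorem MopFun_smul (φ : 𝕋c → ℂ) (hφ : MemLp φ ∞ μc) (c : ℂ) (f : L2) :
    MopFun φ hφ (c • f) = c • MopFun φ hφ f := by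
  apply Lp.ext
  filter_upwards [MopFun_coeFn φ hφ (c • f), MopFun_coeFn φ hφ f,
    Lp.coeFn_smul c f, Lp.coeFn_smul c (MopFun φ hφ f)] with x h1 h2 h3 h4
  simp only [h1, h4, Pi.smul_apply, Pi.mul_apply, h2, h3, smul_eq_mul]
  ring

theorem MopFun_norm (φ : 𝕋c → ℂ) (hφ : MemLp φ ∞ μc) (f : L2) :
    ‖MopFun φ hφ f‖ ≤ (eLpNorm φ ∞ μc).toReal * ‖f‖ := by
  have hrfl : MopFun φ hφ f = ((Lp.memLp f).smul (r := 2) hφ).toLp (φ • ⇑f) := rfl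
  rw [hrfl, Lp.norm_toLp (φ • ⇑f) ((Lp.memLp f).smul (r := 2) hφ), Lp.norm_def]
  have hb : eLpNorm (φ • ⇑f) 2 μc ≤ eLpNorm φ ∞ μc * eLpNorm (⇑f) 2 μc :=
    eLpNorm_smul_le_eLpNorm_top_mul_eLpNorm 2 (Lp.aestronglyMeasurable f) φ
  have hfin : eLpNorm φ ∞ μc * eLpNorm (⇑f) 2 μc ≠ ∞ :=
    ENNReal.mul_ne_top hφ.eLpNorm_ne_top (Lp.eLpNorm_ne_top f)
  calc (eLpNorm (φ • ⇑f) 2 μc).toReal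
      ≤ (eLpNorm φ ∞ μc * eLpNorm (⇑f) 2 μc).toReal := ENNReal.toReal_mono hfin hb
    _ = (eLpNorm φ ∞ μc).toReal * (eLpNorm (⇑f) 2 μc).toReal := ENNReal.toReal_mul

/-- The multiplication (Laurent) operator `M_φ` on `L²(𝕋)` with symbol `φ ∈ L∞(𝕋)`. -/
def Mop (φ : 𝕋c → ℂ) (hφ : MemLp φ ∞ μc) : L2 →L[ℂ] L2 :=
  LinearMap.mkContinuous
    { toFun := MopFun φ hφ
      map_add' := MopFun_add φ hφ
      map_smul' := MopFun_smul φ hφ }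
    (eLpNorm φ ∞ μc).toReal
    (fun f => MopFun_norm φ hφ f)

theorem Mop_coeFn (φ : 𝕋c → ℂ) (hφ : MemLp φ ∞ μc) (f : L2) :
    ⇑(Mop φ hφ f) =ᵐ[μc] fun x => φ x * f x :=
  MopFun_coeFn φ hφ f

/-- The conjugation operator `J : L²(𝕋) → L²(𝕋)`, `(Jf)(z) = f(z̄)`
(composition with `x ↦ -x` on the additive circle). -/
def Jop : L2 →L[ℂ] L2 :=
  LinearMap.mkContinuous
    { toFun := fun f =>
        Lp.compMeasurePreserving (fun x : 𝕋c => -x) (Measure.measurePreserving_neg μc) f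
      map_add' := by
        intro f g
        exact map_add (Lp.compMeasurePreserving _ (Measure.measurePreserving_neg μc)) f g
      map_smul' := by
        intro c f
        apply Lp.ext
        simp only [RingHom.id_apply]
        have hmp := Measure.measurePreserving_neg (μ := μc)
        have h1 := Lp.coeFn_compMeasurePreserving (μ := μc) (c • f) hmp
        have h2 := Lp.coeFn_compMeasurePreserving (μ := μc) f hmp
        have h3 : ⇑(c • f) ∘ (fun x : 𝕋c => -x) =ᵐ[μc] (c • ⇑f) ∘ (fun x : 𝕋c => -x) :=
          hmp.quasiMeasurePreserving.ae_eq_comp (Lp.coeFn_smul c f)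
        have h4 : (c • ⇑f) ∘ (fun x : 𝕋c => -x) = c • (⇑f ∘ fun x : 𝕋c => -x) := rfl
        have h5 : c • (⇑f ∘ fun x : 𝕋c => -x) =ᵐ[μc]
            c • ⇑(Lp.compMeasurePreserving (fun x : 𝕋c => -x) hmp f) :=
          h2.symm.const_smul c
        exact ((h1.trans h3).trans ((h4 ▸ h5 : _))).trans (Lp.coeFn_smul c _).symm }
    1
    (by
      intro f
      simp only [LinearMap.coe_mk, AddHom.coe_mk, one_mul]
      exact le_of_eq (Lp.norm_compMeasurePreserving f _))

/-- The Toeplitz operator `T_φ = P₊ M_φ |_{H²}` with symbol `φ ∈ L∞(𝕋)`. -/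
def Toep (φ : 𝕋c → ℂ) (hφ : MemLp φ ∞ μc) : Hardy →L[ℂ] Hardy :=
  (Submodule.orthogonalProjectionOnto Hardy).comp ((Mop φ hφ).comp Hardy.subtypeL)

/-- The Hankel operator `H_φ = P₊ M_φ J |_{H²}` with symbol `φ ∈ L∞(𝕋)`. -/
def Hank (φ : 𝕋c → ℂ) (hφ : MemLp φ ∞ μc) : Hardy →L[ℂ] Hardy :=
  (Submodule.orthogonalProjectionOnto Hardy).comp ((Mop φ hφ).comp (Jop.comp Hardy.subtypeL))

/-- The coordinate function `z` on the circle. -/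
def zFun : 𝕋c → ℂ := fun x => fourier 1 x

theorem zFun_memℒp : MemLp zFun ∞ μc := by
  refine memLp_top_of_bound ((fourier 1).continuous.aestronglyMeasurable) 1
    (Filter.Eventually.of_forall fun x => ?_)
  simp only [zFun, fourier_apply, Circle.norm_coe, le_refl]

/-- The unilateral shift `T_z`. -/
def Tz : Hardy →L[ℂ] Hardy := Toep zFun zFun_memℒp

/-- The bilateral shift `M_z` on `L²(𝕋)`. -/
def Mz : L2 →L[ℂ] L2 := Mop zFun zFun_memℒp

/-- `A` is a Toeplitz + Hankel operator. -/
def IsToepPlusHank (A : Hardy →L[ℂ] Hardy) : Prop :=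
  ∃ (φ ψ : 𝕋c → ℂ) (hφ : MemLp φ ∞ μc) (hψ : MemLp ψ ∞ μc), A = Toep φ hφ + Hank ψ hψ

/-- `φ` belongs to `H^∞`: it is essentially bounded and all its negative Fourier
coefficients vanish. -/
def IsHinf (φ : 𝕋c → ℂ) : Prop :=
  MemLp φ ∞ μc ∧ ∀ n : ℤ, n < 0 → fourierCoeff φ n = 0

/-- `θ` is an inner function: `θ ∈ H^∞` and `|θ| = 1` a.e. on the circle. -/
def IsInner (θ : 𝕋c → ℂ) : Prop :=
  IsHinf θ ∧ ∀ᵐ x ∂μc, ‖θ x‖ = 1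

theorem Mop_norm_of_inner {θ : 𝕋c → ℂ} (hθ : IsInner θ) (f : L2) :
    ‖Mop θ hθ.1.1 f‖ = ‖f‖ := by
  have h1 : ⇑(Mop θ hθ.1.1 f) =ᵐ[μc] θ • ⇑f := MopFun_coeFn θ hθ.1.1 f
  rw [Lp.norm_def, Lp.norm_def]
  congr 1
  rw [eLpNorm_congr_ae h1]
  apply eLpNorm_congr_norm_ae
  filter_upwards [hθ.2] with x hx
  simp [norm_smul, hx]

/-- The (Beurling-type) subspace `θ H²` of the Hardy space, for an inner function `θ`. -/
def thetaSub (θ : 𝕋c → ℂ) (hθ : IsInner θ) : Submodule ℂ Hardy where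
  carrier := {f | ∃ g : Hardy, (f : L2) = Mop θ hθ.1.1 (g : L2)}
  add_mem' := by
    rintro f f' ⟨g, hg⟩ ⟨g', hg'⟩
    exact ⟨g + g', by
      simp only [Submodule.coe_add, hg, hg']
      rw [← map_add]⟩
  zero_mem' := ⟨0, by simp⟩
  smul_mem' := by
    rintro c f ⟨g, hg⟩
    exact ⟨c • g, by
      rw [Submodule.coe_smul, hg, ← (Mop θ hθ.1.1).map_smul]
      rfl⟩

theorem isClosed_thetaSub (θ : 𝕋c → ℂ) (hθ : IsInner θ) :
    IsClosed ((thetaSub θ hθ) : Set Hardy) := by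
  have hiso : Isometry (fun g : Hardy => Mop θ hθ.1.1 (g : L2)) := by
    apply Isometry.of_dist_eq
    intro g g'
    rw [dist_eq_norm, dist_eq_norm, ← map_sub, ← Submodule.coe_sub, Mop_norm_of_inner hθ]
    rfl
  have hrange : IsClosed (Set.range fun g : Hardy => Mop θ hθ.1.1 (g : L2)) :=
    hiso.isClosedEmbedding.isClosed_range
  have hset : ((thetaSub θ hθ) : Set Hardy) =
      (Subtype.val) ⁻¹' (Set.range fun g : Hardy => Mop θ hθ.1.1 (g : L2)) := by
    ext f
    constructor
    · rintro ⟨g, hg⟩; exact ⟨g, hg.symm⟩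
    · rintro ⟨g, hg⟩; exact ⟨g, hg.symm⟩
  rw [hset]
  exact hrange.preimage continuous_subtype_val

/-- The model space `𝒦_θ = H² ⊖ θH²`. -/
def modelSpace (θ : 𝕋c → ℂ) (hθ : IsInner θ) : Submodule ℂ Hardy := (thetaSub θ hθ)ᗮ

/-- The orthogonal projection of `H²` onto `θH²`. -/
def Ptheta (θ : 𝕋c → ℂ) (hθ : IsInner θ) : Hardy →L[ℂ] Hardy :=
  haveI : CompleteSpace (thetaSub θ hθ) := (isClosed_thetaSub θ hθ).completeSpace_coe
  (thetaSub θ hθ).subtypeL.comp (Submodule.orthogonalProjectionOnto (thetaSub θ hθ))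

/-- The orthogonal projection of `H²` onto the model space `𝒦_θ`. -/
def Pmodel (θ : 𝕋c → ℂ) (hθ : IsInner θ) : Hardy →L[ℂ] Hardy :=
  haveI hc : CompleteSpace (thetaSub θ hθ) := (isClosed_thetaSub θ hθ).completeSpace_coe
  haveI h2 : Submodule.HasOrthogonalProjection (modelSpace θ hθ) :=
    (inferInstance : Submodule.HasOrthogonalProjection (thetaSub θ hθ)ᗮ)
  (modelSpace θ hθ).subtypeL.comp (Submodule.orthogonalProjectionOnto (modelSpace θ hθ))

/-- The monomial `z^k`, as an element of the Hardy space. -/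
def monoH (k : ℕ) : Hardy :=
  ⟨fourierLp 2 (k : ℤ), by
    intro n hn
    rw [← fourierBasis_repr]
    have hb : (fourierLp 2 (k : ℤ) : L2) = fourierBasis (k : ℤ) := by rw [coe_fourierBasis]
    rw [hb, fourierBasis.repr_self]
    exact lp.single_apply_ne 2 (k : ℤ) _ (by omega)⟩

/-- `T_z^*`, the adjoint of the unilateral shift. -/
def TzStar : Hardy →L[ℂ] Hardy := ContinuousLinearMap.adjoint Tz

/-- `M_z^*`, the adjoint of the bilateral shift. -/
def MzStar : L2 →L[ℂ] L2 := ContinuousLinearMap.adjoint Mz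

/-- The constant function `1` as an element of `L²(𝕋)`. -/
def oneL2 : L2 := (memLp_const (1 : ℂ)).toLp (fun _ => (1 : ℂ))

/-- The function `z̄ = conj z` on the circle. -/
def zbarFun : 𝕋c → ℂ := fun x => fourier (-1) x

theorem zbarFun_memℒp : MemLp zbarFun ∞ μc := by
  refine memLp_top_of_bound ((fourier (-1)).continuous.aestronglyMeasurable) 1
    (Filter.Eventually.of_forall fun x => ?_)
  simp only [zbarFun, fourier_apply, Circle.norm_coe, le_refl]

/-- The function `z̄` as an element of `L²(𝕋)`. -/
def zbarL2 : L2 := (zbarFun_memℒp.mono_exponent le_top).toLp zbarFun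

theorem zbarsq_memℒp {ψ : 𝕋c → ℂ} (hψ : MemLp ψ ∞ μc) :
    MemLp (fun x : 𝕋c => ((starRingEnd ℂ) (zFun x) ^ 2 - 1) * ψ x) ∞ μc := by
  have hc : Continuous fun x : 𝕋c => (starRingEnd ℂ) (zFun x) ^ 2 - 1 := by
    have h1 : Continuous (zFun) := (fourier 1).continuous
    exact ((h1.star.pow 2).sub continuous_const)
  have hb : MemLp (fun x : 𝕋c => (starRingEnd ℂ) (zFun x) ^ 2 - 1) ∞ μc := by
    refine memLp_top_of_bound hc.aestronglyMeasurable 2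
      (Filter.Eventually.of_forall fun x => ?_)
    calc ‖(starRingEnd ℂ) (zFun x) ^ 2 - 1‖ ≤ ‖(starRingEnd ℂ) (zFun x) ^ 2‖ + ‖(1 : ℂ)‖ :=
          norm_sub_le _ _
      _ ≤ 2 := by
          rw [norm_pow, RCLike.norm_conj]
          simp only [zFun, fourier_apply, Circle.norm_coe, norm_one]
          norm_num
  have h2 := hψ.smul (r := ∞) hb
  have h3 : ((fun x : 𝕋c => (starRingEnd ℂ) (zFun x) ^ 2 - 1) • ψ) =
      fun x : 𝕋c => ((starRingEnd ℂ) (zFun x) ^ 2 - 1) * ψ x := by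
    funext x
    simp only [Pi.smul_apply, smul_eq_mul, Pi.mul_apply]
  exact h3 ▸ h2

/-- `A` is `θ`-paired: `A = T_φ P_{θH²} + T_ψ P_{𝒦_θ}` for some `φ, ψ ∈ H^∞`. -/
def IsThetaPaired (θ : 𝕋c → ℂ) (hθ : IsInner θ) (X : Hardy →L[ℂ] Hardy) : Prop :=
  ∃ (φ ψ : 𝕋c → ℂ) (hφ : IsHinf φ) (hψ : IsHinf ψ),
    X = (Toep φ hφ.1).comp (Ptheta θ hθ) + (Toep ψ hψ.1).comp (Pmodel θ hθ)



theorem fourierCoeff_congr_ae {f g : 𝕋c → ℂ} (h : f =ᵐ[μc] g) (n : ℤ) :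
    fourierCoeff f n = fourierCoeff g n :=
  integral_congr_ae (h.mono fun x hx => by dsimp only; rw [hx])

theorem memℒp_conj_mul_fourier {φ : 𝕋c → ℂ} (hφ : MemLp φ ∞ μc) (n : ℤ) :
    MemLp (fun x : 𝕋c => (starRingEnd ℂ) (φ x) * fourier n x) ∞ μc := by
  have hconj : MemLp (fun x : 𝕋c => (starRingEnd ℂ) (φ x)) ∞ μc := by
    refine ⟨RCLike.continuous_conj.comp_aestronglyMeasurable hφ.1, ?_⟩
    have h : eLpNorm (fun x : 𝕋c => (starRingEnd ℂ) (φ x)) ∞ μc = eLpNorm φ ∞ μc :=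
      eLpNorm_congr_norm_ae (Filter.Eventually.of_forall fun x => by simp)
    rw [h]; exact hφ.2
  have hf : MemLp (fun x : 𝕋c => (fourier n x : ℂ)) ∞ μc :=
    memLp_top_of_bound (fourier n).continuous.aestronglyMeasurable 1
      (Filter.Eventually.of_forall fun x => by
        simp [fourier_apply, Circle.norm_coe])
  have h3 : ((fun x : 𝕋c => (starRingEnd ℂ) (φ x)) • fun x : 𝕋c => (fourier n x : ℂ)) =
      fun x : 𝕋c => (starRingEnd ℂ) (φ x) * fourier n x := rfl
  exact h3 ▸ hf.smul (r := ∞) hconj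

theorem fourierCoeff_conj_mul_fourier (φ : 𝕋c → ℂ) (n m : ℤ) :
    fourierCoeff (fun x : 𝕋c => (starRingEnd ℂ) (φ x) * fourier n x) m =
      (starRingEnd ℂ) (fourierCoeff φ (n - m)) := by
  unfold fourierCoeff
  rw [← integral_conj]
  refine integral_congr_ae (Filter.Eventually.of_forall fun x => ?_)
  dsimp only
  have h1 : (starRingEnd ℂ) ((fourier (-(n - m)) x : ℂ) • φ x) =
      (fourier (n - m) x : ℂ) * (starRingEnd ℂ) (φ x) := by
    rw [smul_eq_mul, map_mul, fourier_neg, Complex.conj_conj]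
  rw [h1, smul_eq_mul, show n - m = -m + n by ring, fourier_add]
  ring

theorem mul_mem_Hardy {φ : 𝕋c → ℂ} (hφ : IsHinf φ) {f : L2} (hf : f ∈ Hardy) :
    Mop φ hφ.1 f ∈ Hardy := by
  intro n hn
  set h : L2 := ((memℒp_conj_mul_fourier hφ.1 n).mono_exponent le_top).toLp _ with hh
  have hcoe : ⇑h =ᵐ[μc] fun x => (starRingEnd ℂ) (φ x) * fourier n x := MemLp.coeFn_toLp _
  have key : fourierCoeff (⇑(Mop φ hφ.1 f)) n = ⟪h, f⟫_ℂ := by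
    rw [MeasureTheory.L2.inner_def]
    unfold fourierCoeff
    refine integral_congr_ae ?_
    filter_upwards [Mop_coeFn φ hφ.1 f, hcoe] with x h1 h2
    rw [h1, RCLike.inner_apply, h2, map_mul, Complex.conj_conj, smul_eq_mul, ← fourier_neg]
    ring
  rw [key, ← fourierBasis.tsum_inner_mul_inner h f]
  have hterm : ∀ m : ℤ, ⟪h, fourierBasis m⟫_ℂ * ⟪fourierBasis m, f⟫_ℂ = 0 := by
    intro m
    rcases lt_or_ge m 0 with hm | hm
    · have : ⟪fourierBasis m, f⟫_ℂ = 0 := by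
        rw [← fourierBasis.repr_apply_apply, fourierBasis_repr]
        exact hf m hm
      rw [this, mul_zero]
    · have : ⟪h, fourierBasis m⟫_ℂ = 0 := by
        rw [← inner_conj_symm, ← fourierBasis.repr_apply_apply, fourierBasis_repr,
          fourierCoeff_congr_ae hcoe, fourierCoeff_conj_mul_fourier, Complex.conj_conj]
        exact hφ.2 (n - m) (by omega)
      rw [this, zero_mul]
  rw [tsum_congr hterm, tsum_zero]

theorem Toep_coe {φ : 𝕋c → ℂ} (hφ : IsHinf φ) (f : Hardy) :
    ((Toep φ hφ.1 f : Hardy) : L2) = Mop φ hφ.1 (f : L2) :=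
  Submodule.starProjection_eq_self_iff.mpr (mul_mem_Hardy hφ f.2)

theorem Mop_comm (φ ψ : 𝕋c → ℂ) (hφ : MemLp φ ∞ μc) (hψ : MemLp ψ ∞ μc) (f : L2) :
    Mop φ hφ (Mop ψ hψ f) = Mop ψ hψ (Mop φ hφ f) := by
  apply Lp.ext
  filter_upwards [Mop_coeFn φ hφ (Mop ψ hψ f), Mop_coeFn ψ hψ f,
    Mop_coeFn ψ hψ (Mop φ hφ f), Mop_coeFn φ hφ f] with x e1 e2 e3 e4
  rw [e1, e2, e3, e4]
  ring

theorem zFun_isHinf : IsHinf zFun := by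
  refine ⟨zFun_memℒp, fun n hn => ?_⟩
  have h0 : zFun =ᵐ[μc] ⇑(fourierLp 2 (1 : ℤ) : L2) := (coeFn_fourierLp 2 1).symm
  rw [fourierCoeff_congr_ae h0, ← fourierBasis_repr]
  have hb : (fourierLp 2 (1 : ℤ) : L2) = fourierBasis (1 : ℤ) := by rw [coe_fourierBasis]
  rw [hb, fourierBasis.repr_self]
  exact lp.single_apply_ne 2 (1 : ℤ) _ (by omega)

theorem Toep_mem_thetaSub (θ : 𝕋c → ℂ) (hθ : IsInner θ) {η : 𝕋c → ℂ} (hη : IsHinf η)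
    {f : Hardy} (hf : f ∈ thetaSub θ hθ) : Toep η hη.1 f ∈ thetaSub θ hθ := by
  obtain ⟨g, hg⟩ := hf
  refine ⟨⟨Mop η hη.1 (g : L2), mul_mem_Hardy hη g.2⟩, ?_⟩
  rw [Toep_coe hη f, hg]
  exact Mop_comm η θ hη.1 hθ.1.1 (g : L2)

theorem Toep_comm_apply {φ ψ : 𝕋c → ℂ} (hφ : IsHinf φ) (hψ : IsHinf ψ) (f : Hardy) :
    Toep φ hφ.1 (Toep ψ hψ.1 f) = Toep ψ hψ.1 (Toep φ hφ.1 f) := by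
  apply Subtype.ext
  rw [Toep_coe hφ, Toep_coe hψ, Toep_coe hψ, Toep_coe hφ]
  exact Mop_comm φ ψ hφ.1 hψ.1 (f : L2)

theorem Tz_mem_thetaSub (θ : 𝕋c → ℂ) (hθ : IsInner θ) {f : Hardy}
    (hf : f ∈ thetaSub θ hθ) : Tz f ∈ thetaSub θ hθ :=
  Toep_mem_thetaSub θ hθ zFun_isHinf hf

theorem Tz_comm_Toep {φ : 𝕋c → ℂ} (hφ : IsHinf φ) (f : Hardy) :
    Tz (Toep φ hφ.1 f) = Toep φ hφ.1 (Tz f) :=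
  Toep_comm_apply zFun_isHinf hφ f

theorem Ptheta_eq_self (θ : 𝕋c → ℂ) (hθ : IsInner θ) {f : Hardy}
    (hf : f ∈ thetaSub θ hθ) : Ptheta θ hθ f = f := by
  haveI : CompleteSpace (thetaSub θ hθ) := (isClosed_thetaSub θ hθ).completeSpace_coe
  exact Submodule.starProjection_eq_self_iff.mpr hf

theorem Pmodel_eq_zero (θ : 𝕋c → ℂ) (hθ : IsInner θ) {f : Hardy}
    (hf : f ∈ thetaSub θ hθ) : Pmodel θ hθ f = 0 := by
  haveI : CompleteSpace (thetaSub θ hθ) := (isClosed_thetaSub θ hθ).completeSpace_coe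
  haveI h2 : Submodule.HasOrthogonalProjection (modelSpace θ hθ) :=
    (inferInstance : Submodule.HasOrthogonalProjection (thetaSub θ hθ)ᗮ)
  have h := Submodule.orthogonalProjectionOnto_orthogonal_apply_eq_zero
    (K := thetaSub θ hθ) hf
  show ((Submodule.orthogonalProjectionOnto (modelSpace θ hθ) f : modelSpace θ hθ) : Hardy) = 0
  rw [show Submodule.orthogonalProjectionOnto (modelSpace θ hθ) f = 0 from h, Submodule.coe_zero]

theorem Ptheta_add_Pmodel (θ : 𝕋c → ℂ) (hθ : IsInner θ) (f : Hardy) :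
    Ptheta θ hθ f + Pmodel θ hθ f = f := by
  haveI : CompleteSpace (thetaSub θ hθ) := (isClosed_thetaSub θ hθ).completeSpace_coe
  exact (thetaSub θ hθ).starProjection_add_starProjection_orthogonal f

theorem Ptheta_mem (θ : 𝕋c → ℂ) (hθ : IsInner θ) (f : Hardy) :
    Ptheta θ hθ f ∈ thetaSub θ hθ := by
  haveI : CompleteSpace (thetaSub θ hθ) := (isClosed_thetaSub θ hθ).completeSpace_coe
  exact (Submodule.orthogonalProjectionOnto (thetaSub θ hθ) f).2

set_option maxHeartbeats 2000000

/-- **Theorem.** For an inner function `θ` and `φ, ψ ∈ H∞`, the `θ`-paired operator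
`S = T_φ P_{θH²} + T_ψ P_{𝒦_θ}` leaves `θH²` invariant and satisfies
`S T_z - T_z S = (S - T_ψ) P_{θH²} T_z P_{𝒦_θ}`. -/
theorem theta_paired_properties (θ : 𝕋c → ℂ) (hθ : IsInner θ)
    (φ ψ : 𝕋c → ℂ) (hφ : IsHinf φ) (hψ : IsHinf ψ) :
    (∀ f : Hardy, f ∈ thetaSub θ hθ →
        ((Toep φ hφ.1).comp (Ptheta θ hθ) + (Toep ψ hψ.1).comp (Pmodel θ hθ)) f ∈
          thetaSub θ hθ) ∧
      ((Toep φ hφ.1).comp (Ptheta θ hθ) + (Toep ψ hψ.1).comp (Pmodel θ hθ)).comp Tz -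
          Tz.comp ((Toep φ hφ.1).comp (Ptheta θ hθ) + (Toep ψ hψ.1).comp (Pmodel θ hθ)) =
        ((((Toep φ hφ.1).comp (Ptheta θ hθ) + (Toep ψ hψ.1).comp (Pmodel θ hθ)) -
            Toep ψ hψ.1).comp (Ptheta θ hθ)).comp (Tz.comp (Pmodel θ hθ)) := by
  constructor
  · intro f hf
    simp only [ContinuousLinearMap.add_apply, ContinuousLinearMap.comp_apply]
    rw [Ptheta_eq_self θ hθ hf, Pmodel_eq_zero θ hθ hf, map_zero, add_zero]
    exact Toep_mem_thetaSub θ hθ hφ hf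
  · apply ContinuousLinearMap.ext
    intro f
    simp only [ContinuousLinearMap.comp_apply, ContinuousLinearMap.add_apply,
      ContinuousLinearMap.sub_apply]
    have hTu_mem : Tz (Ptheta θ hθ f) ∈ thetaSub θ hθ :=
      Tz_mem_thetaSub θ hθ (Ptheta_mem θ hθ f)
    have hw_mem : Ptheta θ hθ (Tz (Pmodel θ hθ f)) ∈ thetaSub θ hθ :=
      Ptheta_mem θ hθ _
    have hTf : Tz f = Tz (Ptheta θ hθ f) + Tz (Pmodel θ hθ f) := by
      rw [← map_add, Ptheta_add_Pmodel]
    have e5 : Pmodel θ hθ (Tz (Pmodel θ hθ f)) =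
        Tz (Pmodel θ hθ f) - Ptheta θ hθ (Tz (Pmodel θ hθ f)) := by
      rw [eq_sub_iff_add_eq]
      rw [add_comm]
      exact Ptheta_add_Pmodel θ hθ _
    rw [hTf,
      map_add (Ptheta θ hθ) (Tz ((Ptheta θ hθ) f)) (Tz ((Pmodel θ hθ) f)),
      map_add (Pmodel θ hθ) (Tz ((Ptheta θ hθ) f)) (Tz ((Pmodel θ hθ) f)),
      Ptheta_eq_self θ hθ hTu_mem, Pmodel_eq_zero θ hθ hTu_mem, e5,
      map_add Tz ((Toep φ hφ.1) ((Ptheta θ hθ) f)) ((Toep ψ hψ.1) ((Pmodel θ hθ) f)),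
      Tz_comm_Toep hφ ((Ptheta θ hθ) f), Tz_comm_Toep hψ ((Pmodel θ hθ) f)]
    rw [Ptheta_eq_self θ hθ hw_mem]
    rw [Pmodel_eq_zero θ hθ hw_mem]
    simp only [map_zero, map_sub, map_add, zero_add, add_zero]
    abel


end PaperTH
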